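/- A stationary subset S of ω₁ contains, for every countable ordinal α, a closed subset of order type α. -/

import Mathlib

open Cardinal Set

noncomputable def omega1 : Ordinal := (Cardinal.aleph 1).ord

/-- `C` is closed in `κ`: closed under suprema of bounded nonempty subsets. -/
def IsClosedIn (C : Set Ordinal) (k : Ordinal) : Prop :=
  ∀ s : Set Ordinal, s ⊆ C → s.Nonempty → sSup s < k → sSup s ∈ C

/-- `C` is unbounded in `κ`. -/
def IsUnboundedIn (C : Set Ordinal) (k : Ordinal) : Prop :=
  ∀ a < k, ∃ b ∈ C, a ≤ b ∧ b < k

/-- `C` is a club subset of `κ`. -/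
def IsClubIn (C : Set Ordinal) (k : Ordinal) : Prop :=
  C ⊆ Set.Iio k ∧ IsClosedIn C k ∧ IsUnboundedIn C k

/-- `S` is a stationary subset of `κ`: it meets every club. -/
def IsStationaryIn (S : Set Ordinal) (k : Ordinal) : Prop :=
  S ⊆ Set.Iio k ∧ ∀ C, IsClubIn C k → (S ∩ C).Nonempty

/-- The club filter on `κ`: subsets of `κ` containing a club. -/
def clubFilter (k : Ordinal) : Set (Set Ordinal) :=
  {X | X ⊆ Set.Iio k ∧ ∃ C, IsClubIn C k ∧ C ⊆ X}
/-- `C` is closed under suprema of its nonempty subsets that are bounded by an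
element of `C`. -/
def IsClosedSub (C : Set Ordinal) : Prop :=
  ∀ s ⊆ C, s.Nonempty → (∃ b ∈ C, ∀ x ∈ s, x ≤ b) → sSup s ∈ C

-- ### basics
lemma omega1_isLimit : Order.IsSuccLimit omega1 :=
  Cardinal.isSuccLimit_ord (Cardinal.aleph0_le_aleph 1)

lemma succ_lt_omega1 {a : Ordinal} (h : a < omega1) : a + 1 < omega1 := by
  rw [Ordinal.add_one_eq_succ]; exact omega1_isLimit.succ_lt h

lemma lt_self_add_one (o : Ordinal) : o < o + 1 := by
  rw [Ordinal.add_one_eq_succ]; exact Order.lt_succ o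

lemma iSup_nat_lt_omega1 {g : ℕ → Ordinal} (h : ∀ n, g n < omega1) : (⨆ n, g n) < omega1 := by
  refine Ordinal.iSup_lt_ord_lift ?_ h
  rw [show omega1.cof = Cardinal.aleph 1 from Cardinal.isRegular_aleph_one.cof_eq]
  simpa using Cardinal.aleph0_lt_aleph_one

lemma unbounded_strict {A : Set Ordinal} (hA : IsUnboundedIn A omega1) {a : Ordinal}
    (ha : a < omega1) : ∃ b ∈ A, a < b ∧ b < omega1 := by
  obtain ⟨b, hb, hab, hb1⟩ := hA (a + 1) (succ_lt_omega1 ha)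
  exact ⟨b, hb, lt_of_lt_of_le (lt_self_add_one a) hab, hb1⟩

-- ### common limit points
def limitsOf (A : ℕ → Set Ordinal) : Set Ordinal :=
  {β | β < omega1 ∧ 0 < β ∧ ∀ n, sSup (A n ∩ Set.Iio β) = β}

lemma limitsOf_dense {A : ℕ → Set Ordinal} {β : Ordinal} (hβ : β ∈ limitsOf A)
    (n : ℕ) {γ : Ordinal} (hγ : γ < β) : ∃ x ∈ A n, γ < x ∧ x < β := by
  obtain ⟨-, h0, hsup⟩ := hβ
  have hbdd : BddAbove (A n ∩ Set.Iio β) := ⟨β, fun x hx => le_of_lt hx.2⟩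
  have hne : (A n ∩ Set.Iio β).Nonempty := by
    by_contra h
    have := hsup n
    rw [not_nonempty_iff_eq_empty.mp h, csSup_empty] at this
    exact h0.ne (by simpa using this)
  have hlt : γ < sSup (A n ∩ Set.Iio β) := (hsup n).symm ▸ hγ
  obtain ⟨x, hx, hgx⟩ := (lt_csSup_iff hbdd hne).mp hlt
  exact ⟨x, hx.1, hgx, hx.2⟩

lemma limitsOf_succ_lt {A : ℕ → Set Ordinal} {β : Ordinal} (hβ : β ∈ limitsOf A)
    {o : Ordinal} (ho : o < β) : o + 1 < β := by
  obtain ⟨x, -, h1, h2⟩ := limitsOf_dense hβ 0 ho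
  have : o + 1 ≤ x := by rw [Ordinal.add_one_eq_succ]; exact Order.succ_le_of_lt h1
  exact lt_of_le_of_lt this h2

lemma limitsOf_isClub {A : ℕ → Set Ordinal} (hA : ∀ n, IsUnboundedIn (A n) omega1) :
    IsClubIn (limitsOf A) omega1 := by
  refine ⟨fun β hβ => hβ.1, ?_, ?_⟩
  · -- closed
    intro s hs hne hlt
    by_cases hσ : sSup s ∈ s
    · exact hs hσ
    refine ⟨hlt, ?_, fun n => ?_⟩
    · obtain ⟨x, hx⟩ := hne
      exact lt_of_lt_of_le (hs hx).2.1 (le_csSup ⟨omega1, fun y hy => le_of_lt (hs hy).1⟩ hx)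
    · refine le_antisymm (csSup_le' fun y hy => le_of_lt hy.2) ?_
      by_contra h
      push_neg at h
      have hbdds : BddAbove s := ⟨omega1, fun y hy => le_of_lt (hs hy).1⟩
      obtain ⟨x, hxs, hgx⟩ := (lt_csSup_iff hbdds hne).mp h
      have hxσ : x < sSup s := lt_of_le_of_ne (le_csSup hbdds hxs) (fun hc => hσ (hc ▸ hxs))
      obtain ⟨y, hy, h1, h2⟩ := limitsOf_dense (hs hxs) n hgx
      have : y ≤ sSup (A n ∩ Set.Iio (sSup s)) :=
        le_csSup ⟨sSup s, fun z hz => le_of_lt hz.2⟩ ⟨hy, lt_trans h2 hxσ⟩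
      exact absurd (lt_of_lt_of_le h1 this) (lt_irrefl _)
  · -- unbounded
    intro a ha
    classical
    have hnext : ∀ (n : ℕ) (x : Ordinal), x < omega1 → ∃ y, y ∈ A n ∧ x < y ∧ y < omega1 :=
      fun n x hx => unbounded_strict (hA n) hx
    set g : ℕ → Ordinal → Ordinal := fun n x =>
      if h : x < omega1 then (hnext n x h).choose else 0 with hg
    have hgmem : ∀ n x (hx : x < omega1), g n x ∈ A n ∧ x < g n x ∧ g n x < omega1 := by
      intro n x hx
      simp only [hg, dif_pos hx]
      exact (hnext n x hx).choose_spec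
    set h : Ordinal → Ordinal := fun x => (⨆ n, g n x) + 1 with hh
    have hgle : ∀ n x (hx : x < omega1), g n x < h x := by
      intro n x hx
      refine lt_of_le_of_lt (le_ciSup ⟨omega1, ?_⟩ n) (lt_self_add_one _)
      rintro z ⟨m, rfl⟩
      by_cases hm : x < omega1
      · exact le_of_lt (hgmem m x hm).2.2
      · simp only [hg, dif_neg hm]
        exact le_of_lt omega1_isLimit.pos
    have hxh : ∀ x, x < omega1 → x < h x := fun x hx =>
      lt_of_lt_of_le (hgmem 0 x hx).2.1 (le_of_lt (hgle 0 x hx))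
    have hhlt : ∀ x, x < omega1 → h x < omega1 := by
      intro x hx
      exact succ_lt_omega1 (iSup_nat_lt_omega1 (fun n => by
        by_cases hm : x < omega1
        · exact (hgmem n x hm).2.2
        · simpa [hg, dif_neg hm] using omega1_isLimit.pos))
    set seq : ℕ → Ordinal := fun k => Nat.rec a (fun _ prev => h prev) k with hseq
    have hseqlt : ∀ k, seq k < omega1 := by
      intro k
      induction k with
      | zero => exact ha
      | succ k ih => exact hhlt _ ih
    have hseqmono : ∀ k, seq k < seq (k + 1) := fun k => hxh _ (hseqlt k)
    set b : Ordinal := ⨆ k, seq k with hb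
    have hbdd : BddAbove (Set.range seq) := ⟨omega1, by rintro z ⟨k, rfl⟩; exact (hseqlt k).le⟩
    have hblt : b < omega1 := iSup_nat_lt_omega1 hseqlt
    have hseqle : ∀ k, seq k ≤ b := fun k => le_ciSup hbdd k
    refine ⟨b, ⟨hblt, ?_, fun n => ?_⟩, le_trans (hseqle 0) (le_refl b), hblt⟩
    · exact lt_of_le_of_lt zero_le (lt_of_lt_of_le (hseqmono 0) (hseqle 1))
    · refine le_antisymm (csSup_le' fun y hy => le_of_lt hy.2) ?_
      rw [hb]
      refine ciSup_le fun k => ?_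
      have hmem := hgmem n (seq k) (hseqlt k)
      have hyb : g n (seq k) < b :=
        lt_of_lt_of_le (hgle n (seq k) (hseqlt k)) (hseqle (k + 1))
      exact le_trans hmem.2.1.le
        (le_csSup ⟨b, fun z hz => le_of_lt hz.2⟩ ⟨hmem.1, hyb⟩)

lemma limitsOf_mem_closed {A : ℕ → Set Ordinal} {β : Ordinal} (hβ : β ∈ limitsOf A)
    (n : ℕ) (hcl : IsClosedIn (A n) omega1) : β ∈ A n := by
  have hsup := hβ.2.2 n
  obtain ⟨x, hx1, -, hx2⟩ := limitsOf_dense hβ n hβ.2.1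
  have := hcl (A n ∩ Set.Iio β) inter_subset_left ⟨x, hx1, hx2⟩ (by rw [hsup]; exact hβ.1)
  rwa [hsup] at this

lemma stationary_inter_unbounded {S E : Set Ordinal} (hS : IsStationaryIn S omega1)
    (hE : IsClubIn E omega1) : IsUnboundedIn (S ∩ E) omega1 := by
  intro a ha
  have hclub : IsClubIn (E ∩ Set.Ici a) omega1 := by
    refine ⟨fun x hx => hE.1 hx.1, ?_, ?_⟩
    · intro s hs hne hlt
      refine ⟨hE.2.1 s (fun x hx => (hs hx).1) hne hlt, ?_⟩
      obtain ⟨x, hx⟩ := hne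
      exact le_trans (hs hx).2 (le_csSup ⟨omega1, fun y hy => le_of_lt (hE.1 (hs hy).1)⟩ hx)
    · intro c hc
      obtain ⟨b, hb, hcb, hb1⟩ := hE.2.2 (max a c) (max_lt ha hc)
      exact ⟨b, ⟨hb, le_trans (le_max_left a c) hcb⟩, le_trans (le_max_right a c) hcb, hb1⟩
  obtain ⟨x, hxS, hxE, hxa⟩ := hS.2 _ hclub
  exact ⟨x, ⟨hxS, hxE⟩, hxa, hS.1 hxS⟩

lemma isClosedSub_insert {C : Set Ordinal} {x : Ordinal} (hC : IsClosedSub C)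
    (hlt : ∀ c ∈ C, c < x)
    (htop : C = ∅ ∨ (∃ m ∈ C, ∀ c ∈ C, c ≤ m) ∨ sSup C = x) :
    IsClosedSub (insert x C) := by
  intro s hs hne hbdd
  have hbddS : BddAbove s := ⟨x, fun y hy => (hs hy).elim le_of_eq (fun h => (hlt y h).le)⟩
  by_cases hxs : x ∈ s
  · have : sSup s = x :=
      le_antisymm (csSup_le' fun y hy => (hs hy).elim le_of_eq (fun h => (hlt y h).le))
        (le_csSup hbddS hxs)
    rw [this]; exact mem_insert _ _
  · have hsC : s ⊆ C := fun y hy => (hs hy).resolve_left (fun h => hxs (h ▸ hy))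
    rcases htop with hempty | ⟨m, hm, hmax⟩ | hsup
    · obtain ⟨y, hy⟩ := hne
      exact absurd (hsC hy) (by simp [hempty])
    · exact mem_insert_of_mem _ (hC s hsC hne ⟨m, hm, fun z hz => hmax z (hsC hz)⟩)
    · by_cases h : sSup s = x
      · rw [h]; exact mem_insert _ _
      · have hlt2 : sSup s < sSup C :=
          hsup.symm ▸ lt_of_le_of_ne (csSup_le' fun y hy => (hlt y (hsC hy)).le) h
        obtain ⟨y0, hy0⟩ := id hne
        obtain ⟨c, hc, hcgt⟩ := (lt_csSup_iff ⟨x, fun y hy => (hlt y hy).le⟩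
          ⟨y0, hsC hy0⟩).mp hlt2
        exact mem_insert_of_mem _
          (hC s hsC hne ⟨c, hc, fun z hz => le_trans (le_csSup hbddS hz) hcgt.le⟩)

lemma exists_cofinal_seq {β : Ordinal} (hβ1 : β < omega1) (h0 : 0 < β)
    (hlim : ∀ o < β, o + 1 < β) :
    ∃ b : ℕ → Ordinal, (∀ n, b n < b (n + 1)) ∧ (∀ n, b n < β) ∧ ∀ o < β, ∃ n, o < b n := by
  have hcard : β.card ≤ Cardinal.aleph0 := by
    have : β.card < Cardinal.aleph 1 := Cardinal.lt_ord.mp hβ1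
    rwa [← Cardinal.succ_aleph0, Order.lt_succ_iff] at this
  have hcount : Countable β.ToType := by
    rw [← Cardinal.mk_le_aleph0_iff, Cardinal.mk_toType]; exact hcard
  haveI hne : Nonempty β.ToType := Ordinal.nonempty_toType_iff.mpr h0.ne'
  obtain ⟨e0, he0⟩ := exists_surjective_nat β.ToType
  set e : ℕ → Set.Iio β := fun n => (Ordinal.ToType.mk (o := β)).symm (e0 n) with he
  have hesurj : Function.Surjective e := fun y => by
    obtain ⟨n, hn⟩ := he0 (Ordinal.ToType.mk (o := β) y)
    exact ⟨n, by simp [he, hn]⟩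
  classical
  set b : ℕ → Ordinal := fun n => Nat.rec ((e 0 : Ordinal))
    (fun m prev => max prev (e (m + 1) : Ordinal) + 1) n with hb
  have hblt : ∀ n, b n < β := by
    intro n
    induction n with
    | zero => exact (e 0).2
    | succ n ih => exact hlim _ (max_lt ih (e (n + 1)).2)
  have hbmono : ∀ n, b n < b (n + 1) := fun n =>
    lt_of_le_of_lt (le_max_left _ _) (lt_self_add_one _)
  have hble : ∀ m, (e m : Ordinal) ≤ b m := by
    intro m
    cases m with
    | zero => exact le_refl _
    | succ m => exact le_of_lt (lt_of_le_of_lt (le_max_right _ _) (lt_self_add_one _))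
  refine ⟨b, hbmono, hblt, fun o ho => ?_⟩
  obtain ⟨m, hm⟩ := hesurj ⟨o, ho⟩
  have : o ≤ b m := by rw [← show ((e m : Ordinal)) = o from congrArg Subtype.val hm] at *; exact hble m
  exact ⟨m + 1, lt_of_le_of_lt this (hbmono m)⟩

universe u v

lemma master {S : Set Ordinal.{u}} (hS : IsStationaryIn S omega1) :
    ∀ l : Ordinal.{v}, l < omega1 →
      ∃ E, IsClubIn E omega1 ∧ ∀ β ∈ E, ∀ γ < β, ∀ a : Ordinal.{v},
        ∃ f : Ordinal.{v} → Ordinal.{u},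
          StrictMonoOn f (Set.Ico a (a + l)) ∧
          (f '' Set.Ico a (a + l)) ⊆ S ∩ Set.Ioo γ β ∧
          IsClosedSub (f '' Set.Ico a (a + l)) ∧
          (Order.IsSuccLimit l → sSup (f '' Set.Ico a (a + l)) = β) := by
  intro l
  induction l using Ordinal.induction with
  | _ l IH =>
  rcases Ordinal.zero_or_succ_or_isSuccLimit l with rfl | ⟨l', rfl⟩ | hlim
  · -- case l = 0
    intro _
    refine ⟨Set.Iio omega1, ⟨subset_rfl, fun s _ _ hlt => hlt, fun a ha => ⟨a, ha, le_rfl, ha⟩⟩, ?_⟩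
    intro β hβ γ hγ a
    have hempty : Set.Ico a (a + 0) = (∅ : Set Ordinal) := by rw [add_zero, Set.Ico_self]
    refine ⟨fun _ => 0, fun i hi => absurd (hempty ▸ hi) (notMem_empty i), ?_, ?_, ?_⟩
    · rw [hempty, Set.image_empty]; exact empty_subset _
    · rw [hempty, Set.image_empty]
      intro s hs hne _
      obtain ⟨y, hy⟩ := hne
      exact absurd (hs hy) (notMem_empty y)
    · intro h; exact absurd h Ordinal.not_isSuccLimit_zero
  · -- case l = succ l'
    intro hl
    have hl' : l' < omega1 := lt_trans (Order.lt_succ l') hl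
    obtain ⟨E', hE'club, hE'⟩ := IH l' (Order.lt_succ l') hl'
    have hunb : IsUnboundedIn (S ∩ E') omega1 := stationary_inter_unbounded hS hE'club
    refine ⟨limitsOf (fun _ => S ∩ E'), limitsOf_isClub (fun _ => hunb), ?_⟩
    intro β hβ γ hγ a
    obtain ⟨x, ⟨hxS, hxE'⟩, hγx, hxβ⟩ := limitsOf_dense hβ 0 hγ
    obtain ⟨f₀, hmono₀, hsub₀, hclosed₀, hsup₀⟩ := hE' x hxE' γ hγx a
    classical
    set f : Ordinal → Ordinal := fun i => if i = a + l' then x else f₀ i with hf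
    have hfx : f (a + l') = x := if_pos rfl
    have hIco : Set.Ico a (a + Order.succ l') = insert (a + l') (Set.Ico a (a + l')) := by
      rw [Ordinal.add_succ]
      ext i
      simp only [Set.mem_Ico, Set.mem_insert_iff, Order.lt_succ_iff]
      constructor
      · rintro ⟨h1, h2⟩
        rcases eq_or_lt_of_le h2 with h | h
        · exact Or.inl h
        · exact Or.inr ⟨h1, h⟩
      · rintro (rfl | ⟨h1, h2⟩)
        · exact ⟨le_self_add, le_refl _⟩
        · exact ⟨h1, h2.le⟩
    have hagree : ∀ i ∈ Set.Ico a (a + l'), f i = f₀ i := by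
      intro i hi
      simp only [hf, if_neg (ne_of_lt hi.2)]
    have himage : f '' Set.Ico a (a + Order.succ l') =
        insert x (f₀ '' Set.Ico a (a + l')) := by
      rw [hIco, Set.image_insert_eq, hfx]
      congr 1
      exact Set.image_congr hagree
    have hximg : ∀ y ∈ f₀ '' Set.Ico a (a + l'), y < x := fun y hy => (hsub₀ hy).2.2
    have hmono : StrictMonoOn f (Set.Ico a (a + Order.succ l')) := by
      rw [hIco]
      intro i hi j hj hij
      rcases Set.mem_insert_iff.mp hj with rfl | hj
      · rcases Set.mem_insert_iff.mp hi with rfl | hi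
        · exact absurd hij (lt_irrefl _)
        · rw [hfx, hagree i hi]
          exact hximg _ ⟨i, hi, rfl⟩
      · rcases Set.mem_insert_iff.mp hi with rfl | hi
        · exact absurd (lt_trans hij hj.2) (lt_irrefl _)
        · rw [hagree i hi, hagree j hj]
          exact hmono₀ hi hj hij
    have hsub : f '' Set.Ico a (a + Order.succ l') ⊆ S ∩ Set.Ioo γ β := by
      rw [himage]
      rintro y hy
      rcases Set.mem_insert_iff.mp hy with rfl | hy
      · exact ⟨hxS, hγx, hxβ⟩
      · obtain ⟨h1, h2, h3⟩ := hsub₀ hy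
        exact ⟨h1, h2, lt_trans h3 hxβ⟩
    have hclosed : IsClosedSub (f '' Set.Ico a (a + Order.succ l')) := by
      rw [himage]
      refine isClosedSub_insert hclosed₀ hximg ?_
      rcases Ordinal.zero_or_succ_or_isSuccLimit l' with rfl | ⟨l'', rfl⟩ | hlim'
      · left; rw [add_zero, Set.Ico_self, Set.image_empty]
      · right; left
        have hmem : a + l'' ∈ Set.Ico a (a + Order.succ l'') :=
          ⟨le_self_add, by rw [Ordinal.add_succ]; exact Order.lt_succ _⟩
        refine ⟨f₀ (a + l''), ⟨a + l'', hmem, rfl⟩, ?_⟩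
        rintro c ⟨i, hi, rfl⟩
        have hile : i ≤ a + l'' := by
          have h2 := hi.2
          rw [Ordinal.add_succ, Order.lt_succ_iff] at h2
          exact h2
        rcases eq_or_lt_of_le hile with h | h
        · exact le_of_eq (by rw [h])
        · exact (hmono₀ hi hmem h).le
      · right; right; exact hsup₀ hlim'
    exact ⟨f, hmono, hsub, hclosed, fun h => absurd h (Order.not_isSuccLimit_succ _)⟩
  · -- case l limit
    intro hl
    classical
    obtain ⟨g, hgmono, hglt, hgcof⟩ := exists_cofinal_seq hl hlim.pos
      (fun o ho => by rw [Ordinal.add_one_eq_succ]; exact hlim.succ_lt ho)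
    -- partial sums
    set p : ℕ → Ordinal := fun n => Nat.rec 0 (fun m _ => g m + 1) n with hp
    have hp0 : p 0 = 0 := rfl
    have hpsucc : ∀ n, p (n + 1) = g n + 1 := fun n => rfl
    have hple : ∀ n, p n ≤ g n := by
      intro n
      induction n with
      | zero => exact zero_le
      | succ n _ =>
        rw [hpsucc, Ordinal.add_one_eq_succ]
        exact Order.succ_le_of_lt (hgmono n)
    have hpmono : ∀ n, p n < p (n + 1) := fun n =>
      lt_of_le_of_lt (hple n) (by rw [hpsucc]; exact lt_self_add_one _)
    have hplt : ∀ n, p n < l := by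
      intro n
      cases n with
      | zero => rw [hp0]; exact hlim.pos
      | succ n =>
        rw [hpsucc, Ordinal.add_one_eq_succ]
        exact hlim.succ_lt (hglt n)
    have hpmonole : Monotone p := monotone_nat_of_le_succ (fun n => (hpmono n).le)
    set bl : ℕ → Ordinal := fun n => p (n + 1) - p n with hbl
    have hbl_add : ∀ n, p n + bl n = p (n + 1) := fun n =>
      Ordinal.add_sub_cancel_of_le (hpmono n).le
    have hbl_lt : ∀ n, bl n < l := fun n =>
      lt_of_le_of_lt (Ordinal.sub_le_self _ _) (hplt (n + 1))
    have hIHfam : ∀ n : ℕ, ∃ E, IsClubIn E omega1 ∧ ∀ β ∈ E, ∀ γ < β, ∀ a : Ordinal,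
        ∃ f : Ordinal → Ordinal,
          StrictMonoOn f (Set.Ico a (a + bl n)) ∧
          (f '' Set.Ico a (a + bl n)) ⊆ S ∩ Set.Ioo γ β ∧
          IsClosedSub (f '' Set.Ico a (a + bl n)) ∧
          (Order.IsSuccLimit (bl n) → sSup (f '' Set.Ico a (a + bl n)) = β) :=
      fun n => IH (bl n) (hbl_lt n) (lt_trans (hbl_lt n) hl)
    choose Efam hEfamclub hEfam using hIHfam
    have hEinfclub : IsClubIn (limitsOf Efam) omega1 :=
      limitsOf_isClub (fun n => (hEfamclub n).2.2)
    have hEinfsub : ∀ n, limitsOf Efam ⊆ Efam n :=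
      fun n β hβ => limitsOf_mem_closed hβ n (hEfamclub n).2.1
    refine ⟨limitsOf (fun _ => limitsOf Efam),
      limitsOf_isClub (fun _ => hEinfclub.2.2), ?_⟩
    intro β hβ γ hγ a
    have hβ1 : β < omega1 := hβ.1
    obtain ⟨c, hcmono, hclt, hccof⟩ := exists_cofinal_seq hβ1 hβ.2.1
      (fun o ho => limitsOf_succ_lt hβ ho)
    have step : ∀ x, x < β → ∃ y, y ∈ limitsOf Efam ∧ x < y ∧ y < β := fun x hx => by
      obtain ⟨y, h1, h2, h3⟩ := limitsOf_dense hβ 0 hx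
      exact ⟨y, h1, h2, h3⟩
    set nx : Ordinal → Ordinal := fun x => if h : x < β then (step x h).choose else 0 with hnx
    have hnxspec : ∀ x, x < β → nx x ∈ limitsOf Efam ∧ x < nx x ∧ nx x < β := by
      intro x hx
      simp only [hnx, dif_pos hx]
      exact (step x hx).choose_spec
    set e : ℕ → Ordinal := fun n => Nat.rec (nx (max γ (c 0)))
      (fun m prev => nx (max prev (c (m + 1)))) n with he
    have he0 : e 0 = nx (max γ (c 0)) := rfl
    have hesucc : ∀ n, e (n + 1) = nx (max (e n) (c (n + 1))) := fun n => rfl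
    have heprop : ∀ n, e n ∈ limitsOf Efam ∧ e n < β := by
      intro n
      induction n with
      | zero =>
        have h := hnxspec (max γ (c 0)) (max_lt hγ (hclt 0))
        exact ⟨h.1, h.2.2⟩
      | succ n ih =>
        have h := hnxspec (max (e n) (c (n + 1))) (max_lt ih.2 (hclt (n + 1)))
        exact ⟨h.1, h.2.2⟩
    have hemem : ∀ n, e n ∈ limitsOf Efam := fun n => (heprop n).1
    have heβ : ∀ n, e n < β := fun n => (heprop n).2
    have hestep : ∀ n, e n < e (n + 1) := by
      intro n
      rw [hesucc]
      exact lt_of_le_of_lt (le_max_left _ _)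
        (hnxspec (max (e n) (c (n + 1))) (max_lt (heβ n) (hclt (n + 1)))).2.1
    have hec : ∀ n, c n < e n := by
      intro n
      cases n with
      | zero =>
        rw [he0]
        exact lt_of_le_of_lt (le_max_right _ _) (hnxspec _ (max_lt hγ (hclt 0))).2.1
      | succ n =>
        rw [hesucc]
        exact lt_of_le_of_lt (le_max_right _ _) (hnxspec _ (max_lt (heβ n) (hclt (n + 1)))).2.1
    have heγ : ∀ n, γ < e n := by
      intro n
      induction n with
      | zero =>
        rw [he0]
        exact lt_of_le_of_lt (le_max_left _ _) (hnxspec _ (max_lt hγ (hclt 0))).2.1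
      | succ n ih => exact lt_trans ih (hestep n)
    have hemono : StrictMono e := strictMono_nat_of_lt_succ hestep
    -- block copies
    have hblocks : ∀ n : ℕ, ∃ f : Ordinal → Ordinal,
        StrictMonoOn f (Set.Ico (a + p n) (a + p (n + 1))) ∧
        f '' Set.Ico (a + p n) (a + p (n + 1)) ⊆ S ∩ Set.Ioo (e n) (e (n + 1)) ∧
        IsClosedSub (f '' Set.Ico (a + p n) (a + p (n + 1))) := by
      intro n
      have hx : e (n + 1) ∈ Efam n := hEinfsub n (hemem (n + 1))
      obtain ⟨f, h1, h2, h3, -⟩ := hEfam n (e (n + 1)) hx (e n) (hestep n) (a + p n)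
      rw [add_assoc, hbl_add n] at h1 h2 h3
      exact ⟨f, h1, h2, h3⟩
    choose F hFmono hFsub hFclosed using hblocks
    set f : Ordinal → Ordinal := fun i => if h : ∃ n : ℕ, i < a + p (n + 1)
      then F (Nat.find h) i else 0 with hf
    have hexists : ∀ i ∈ Set.Ico a (a + l), ∃ n : ℕ, i < a + p (n + 1) := by
      intro i hi
      obtain ⟨o, hol, hio⟩ := ((Ordinal.isNormal_add_right a).lt_iff_exists_lt hlim).mp hi.2
      obtain ⟨n, hn⟩ := hgcof o hol
      refine ⟨n, lt_of_lt_of_le hio (add_le_add_right ?_ a)⟩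
      rw [hpsucc]
      exact (lt_trans hn (lt_self_add_one _)).le
    have hblockmem : ∀ (i : Ordinal) (h : ∃ n : ℕ, i < a + p (n + 1)),
        a ≤ i → a + p (Nat.find h) ≤ i := by
      intro i h hai
      cases hfind : Nat.find h with
      | zero => rw [hp0, add_zero]; exact hai
      | succ m =>
        have hmin := Nat.find_min h (m := m) (by rw [hfind]; exact Nat.lt_succ_self m)
        exact not_lt.mp hmin
    have hagree : ∀ n, ∀ i ∈ Set.Ico (a + p n) (a + p (n + 1)), f i = F n i := by
      intro n i hi
      have hQ : ∃ m : ℕ, i < a + p (m + 1) := ⟨n, hi.2⟩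
      have hfind : Nat.find hQ = n := by
        refine le_antisymm (Nat.find_min' hQ hi.2) ?_
        by_contra hcon
        push_neg at hcon
        have h1 := Nat.find_spec hQ
        have h2 : a + p (Nat.find hQ + 1) ≤ a + p n :=
          add_le_add_right (hpmonole (Nat.succ_le_of_lt hcon)) a
        exact absurd (lt_of_lt_of_le h1 (le_trans h2 hi.1)) (lt_irrefl i)
      simp only [hf, dif_pos hQ, hfind]
    have himageUnion : f '' Set.Ico a (a + l) =
        ⋃ n : ℕ, F n '' Set.Ico (a + p n) (a + p (n + 1)) := by
      apply Set.Subset.antisymm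
      · rintro y ⟨i, hi, rfl⟩
        have h := hexists i hi
        have hmem : i ∈ Set.Ico (a + p (Nat.find h)) (a + p (Nat.find h + 1)) :=
          ⟨hblockmem i h hi.1, Nat.find_spec h⟩
        rw [hagree (Nat.find h) i hmem]
        exact Set.mem_iUnion.mpr ⟨Nat.find h, ⟨i, hmem, rfl⟩⟩
      · intro y hy
        obtain ⟨n, hyn⟩ := Set.mem_iUnion.mp hy
        obtain ⟨i, hi, rfl⟩ := hyn
        have hiIco : i ∈ Set.Ico a (a + l) := by
          constructor
          · exact le_trans le_self_add hi.1
          · exact lt_of_lt_of_le hi.2 (add_le_add_right (hplt (n + 1)).le a)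
        exact ⟨i, hiIco, hagree n i hi⟩
    have hImmax : ∀ n, ∃ M ∈ F n '' Set.Ico (a + p n) (a + p (n + 1)),
        ∀ y ∈ F n '' Set.Ico (a + p n) (a + p (n + 1)), y ≤ M := by
      intro n
      have htop : a + g n ∈ Set.Ico (a + p n) (a + p (n + 1)) := by
        constructor
        · exact add_le_add_right (hple n) a
        · rw [hpsucc, ← add_assoc]
          exact lt_self_add_one _
      refine ⟨F n (a + g n), ⟨_, htop, rfl⟩, ?_⟩
      rintro y ⟨i, hi, rfl⟩
      have hile : i ≤ a + g n := by
        have h2 := hi.2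
        rw [hpsucc, ← add_assoc, Ordinal.add_one_eq_succ, Order.lt_succ_iff] at h2
        exact h2
      rcases eq_or_lt_of_le hile with h | h
      · exact le_of_eq (by rw [h])
      · exact (hFmono n hi htop h).le
    have hmono : StrictMonoOn f (Set.Ico a (a + l)) := by
      intro i hi j hj hij
      have hie := hexists i hi
      have hje := hexists j hj
      have hiB : i ∈ Set.Ico (a + p (Nat.find hie)) (a + p (Nat.find hie + 1)) :=
        ⟨hblockmem i hie hi.1, Nat.find_spec hie⟩
      have hjB : j ∈ Set.Ico (a + p (Nat.find hje)) (a + p (Nat.find hje + 1)) :=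
        ⟨hblockmem j hje hj.1, Nat.find_spec hje⟩
      rw [hagree _ i hiB, hagree _ j hjB]
      have hnij : Nat.find hie ≤ Nat.find hje :=
        Nat.find_min' hie (lt_trans hij (Nat.find_spec hje))
      rcases eq_or_lt_of_le hnij with h | h
      · rw [h] at hiB ⊢
        exact hFmono _ hiB hjB hij
      · have h1 : F (Nat.find hie) i < e (Nat.find hie + 1) :=
          (hFsub _ ⟨i, hiB, rfl⟩).2.2
        have h2 : e (Nat.find hje) < F (Nat.find hje) j :=
          (hFsub _ ⟨j, hjB, rfl⟩).2.1
        exact lt_of_lt_of_le h1 (le_trans (hemono.monotone h) h2.le)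
    have hsub : f '' Set.Ico a (a + l) ⊆ S ∩ Set.Ioo γ β := by
      rw [himageUnion]
      intro y hy
      obtain ⟨n, hyn⟩ := Set.mem_iUnion.mp hy
      obtain ⟨h1, h2, h3⟩ := hFsub n hyn
      exact ⟨h1, lt_trans (heγ n) h2, lt_trans h3 (heβ (n + 1))⟩
    have hclosed : IsClosedSub (f '' Set.Ico a (a + l)) := by
      rw [himageUnion]
      intro s hs hne hbdd
      obtain ⟨b0, hb0, hb0bd⟩ := hbdd
      obtain ⟨n0, hb0n⟩ := Set.mem_iUnion.mp hb0
      have hTne : {n : ℕ | (s ∩ F n '' Set.Ico (a + p n) (a + p (n + 1))).Nonempty}.Nonempty := by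
        obtain ⟨y, hy⟩ := hne
        obtain ⟨k, hk⟩ := Set.mem_iUnion.mp (hs hy)
        exact ⟨k, y, hy, hk⟩
      have hTbdd : ∀ k ∈ {n : ℕ | (s ∩ F n '' Set.Ico (a + p n) (a + p (n + 1))).Nonempty},
          k ≤ n0 := by
        rintro k ⟨y, hys, hyk⟩
        by_contra hc
        push_neg at hc
        have h1 : y ≤ b0 := hb0bd y hys
        have h2 : e k < y := (hFsub k hyk).2.1
        have h3 : b0 < e (n0 + 1) := (hFsub n0 hb0n).2.2
        have h4 : e (n0 + 1) ≤ e k := hemono.monotone hc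
        exact absurd (lt_of_le_of_lt h1 (lt_of_lt_of_le h3 (le_trans h4 h2.le)))
          (lt_irrefl y)
      set T := {n : ℕ | (s ∩ F n '' Set.Ico (a + p n) (a + p (n + 1))).Nonempty} with hT
      have hmT : sSup T ∈ T := Nat.sSup_mem hTne ⟨n0, hTbdd⟩
      have hkm : ∀ k ∈ T, k ≤ sSup T := fun k hk => le_csSup ⟨n0, hTbdd⟩ hk
      set m := sSup T with hm
      obtain ⟨M, hM1, hM2⟩ := hImmax m
      obtain ⟨z, hzs, hzm⟩ := hmT
      have hbdds : BddAbove s := ⟨b0, hb0bd⟩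
      have hssup : sSup s = sSup (s ∩ F m '' Set.Ico (a + p m) (a + p (m + 1))) := by
        apply le_antisymm
        · refine csSup_le hne fun y hy => ?_
          obtain ⟨k, hk⟩ := Set.mem_iUnion.mp (hs hy)
          have hkT : k ∈ T := ⟨y, hy, hk⟩
          rcases eq_or_lt_of_le (hkm k hkT) with h | h
          · exact le_csSup ⟨M, fun w hw => hM2 w hw.2⟩ ⟨hy, h ▸ hk⟩
          · have h1 : y < e (k + 1) := (hFsub k hk).2.2
            have h2 : e (k + 1) ≤ e m := hemono.monotone h
            have h3 : e m < z := (hFsub m hzm).2.1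
            exact le_of_lt (lt_of_lt_of_le (lt_of_lt_of_le h1 h2) (le_trans h3.le
              (le_csSup ⟨M, fun w hw => hM2 w hw.2⟩ ⟨hzs, hzm⟩)))
        · exact csSup_le ⟨z, hzs, hzm⟩ fun y hy => le_csSup hbdds hy.1
      rw [hssup]
      have hfin : sSup (s ∩ F m '' Set.Ico (a + p m) (a + p (m + 1))) ∈
          F m '' Set.Ico (a + p m) (a + p (m + 1)) :=
        hFclosed m _ Set.inter_subset_right ⟨z, hzs, hzm⟩
          ⟨M, hM1, fun w hw => hM2 w hw.2⟩
      exact Set.mem_iUnion.mpr ⟨m, hfin⟩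
    have hsupβ : sSup (f '' Set.Ico a (a + l)) = β := by
      rw [himageUnion]
      have hbound : ∀ y ∈ ⋃ n : ℕ, F n '' Set.Ico (a + p n) (a + p (n + 1)), y ≤ β := by
        intro y hy
        obtain ⟨k, hk⟩ := Set.mem_iUnion.mp hy
        exact (lt_trans (hFsub k hk).2.2 (heβ (k + 1))).le
      apply le_antisymm
      · refine csSup_le ?_ hbound
        obtain ⟨M, hM1, -⟩ := hImmax 0
        exact ⟨M, Set.mem_iUnion.mpr ⟨0, hM1⟩⟩
      · by_contra hcon
        push_neg at hcon
        obtain ⟨n, hn⟩ := hccof _ hcon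
        obtain ⟨M, hM1, -⟩ := hImmax n
        have h1 : e n < M := (hFsub n hM1).2.1
        have h2 : M ≤ sSup (⋃ n : ℕ, F n '' Set.Ico (a + p n) (a + p (n + 1))) :=
          le_csSup ⟨β, hbound⟩ (Set.mem_iUnion.mpr ⟨n, hM1⟩)
        exact absurd hn (not_lt.mpr (le_trans (lt_trans (hec n) h1).le h2))
    exact ⟨f, hmono, hsub, hclosed, fun _ => hsupβ⟩

/-- A stationary subset S of ω₁ contains, for every countable ordinal α, a closed
subset of order type α. -/
theorem stmt8 (S : Set Ordinal) (hS : IsStationaryIn S omega1)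
    (α : Ordinal) (hα : α < omega1) :
    ∃ C : Set Ordinal, C ⊆ S ∧ IsClosedSub C ∧ Nonempty (Set.Iio α ≃o C) := by
  obtain ⟨E, hEclub, hE⟩ := master hS α hα
  have h1 : (1 : Ordinal) < omega1 := by
    have := omega1_isLimit.succ_lt omega1_isLimit.pos
    rwa [Ordinal.succ_zero] at this
  obtain ⟨β, hβE, h1β, hβ1⟩ := hEclub.2.2 1 h1
  have h0β : (0 : Ordinal) < β := lt_of_lt_of_le zero_lt_one h1β
  obtain ⟨f, hmono, hsub, hclosed, -⟩ := hE β hβE 0 h0β 0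
  have hIco : Set.Ico (0 : Ordinal) (0 + α) = Set.Iio α := by
    rw [zero_add]
    ext i
    simp [zero_le]
  rw [hIco] at hmono hsub hclosed
  refine ⟨f '' Set.Iio α, fun y hy => (hsub hy).1, hclosed, ?_⟩
  have hg : StrictMono (fun i : Set.Iio α => (⟨f i, ⟨i.1, i.2, rfl⟩⟩ : f '' Set.Iio α)) := by
    intro i j hij
    change f i < f j
    exact hmono i.2 j.2 (Subtype.coe_lt_coe.mpr hij)
  have hgs : Function.Surjective
      (fun i : Set.Iio α => (⟨f i, ⟨i.1, i.2, rfl⟩⟩ : f '' Set.Iio α)) := by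
    rintro ⟨y, i, hi, rfl⟩
    exact ⟨⟨i, hi⟩, rfl⟩
  exact ⟨StrictMono.orderIsoOfSurjective _ hg hgs⟩
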